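/- Let (R, M) be a commutative local ring with M = ⊕_{λ∈Λ} Rw_λ an internal direct sum with |Λ| ≥ 2, and suppose every prime ideal of R is a direct sum of cyclic R-modules. Then every non-maximal prime ideal P of R equals ⊕_{λ∈Λ∖{λ₀}} Rw_λ for some λ₀ ∈ Λ with w_{λ₀} ∉ P. -/

import Mathlib

/-- An ideal `P` of a commutative ring `R` is an internal direct sum of cyclic
`R`-modules: there is a family of elements of `P` whose cyclic spans are
independent and whose supremum is `P`. -/
def IsDirectSumOfCyclics {R : Type} [CommRing R] (P : Ideal R) : Prop :=
  ∃ (ι : Type) (w : ι → R), (∀ i, w i ∈ P) ∧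
    iSupIndep (fun i => Ideal.span {w i}) ∧ (⨆ i, Ideal.span {w i}) = P

/-- Componentwise-zero from an independent family of submodules of R. -/
theorem aux_comp_zero {R : Type} [CommRing R] {ι : Type} [DecidableEq ι] {p : ι → Submodule R R}
    (hp : iSupIndep p) (s : Finset ι) (y : ι → R) (hy : ∀ j, y j ∈ p j)
    (hsum : ∑ j ∈ s, y j = 0) : ∀ j ∈ s, y j = 0 := by
  intro j hj
  have h1 : y j = -∑ k ∈ s.erase j, y k := by
    have h := Finset.add_sum_erase s y hj
    rw [hsum] at h
    exact eq_neg_of_add_eq_zero_left h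
  have h2 : y j ∈ ⨆ k ≠ j, p k := by
    rw [h1]
    exact neg_mem (Submodule.sum_mem _ fun k hk =>
      Submodule.mem_iSup_of_mem k
        (Submodule.mem_iSup_of_mem (Finset.ne_of_mem_erase hk) (hy k)))
  exact Submodule.disjoint_def.mp (hp j) _ (hy j) h2

/-- Representation of elements of a supremum of singleton spans. -/
theorem aux_rep {R : Type} [CommRing R] {ι : Type} (v : ι → R) {x : R}
    (hx : x ∈ ⨆ i, Ideal.span {v i}) :
    ∃ c : ι →₀ R, (c.sum fun j r => r * v j) = x := by
  have he : (⨆ i, Ideal.span {v i}) = Submodule.span R (Set.range v) := by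
    rw [Submodule.span_range_eq_iSup]
  rw [he] at hx
  obtain ⟨c, hc⟩ := (Finsupp.mem_span_range_iff_exists_finsupp).1 hx
  exact ⟨c, by simpa [smul_eq_mul] using hc⟩

theorem nonmaximal_prime_eq_complement_summand
    {R : Type} [CommRing R] [IsLocalRing R] {Λ : Type} [Nontrivial Λ]
    (w : Λ → R) (hw : ∀ l, w l ≠ 0)
    (hmem : ∀ l, w l ∈ IsLocalRing.maximalIdeal R)
    (hindep : iSupIndep (fun l => Ideal.span {w l}))
    (hsup : (⨆ l, Ideal.span {w l}) = IsLocalRing.maximalIdeal R)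
    (h : ∀ P : Ideal R, P.IsPrime → IsDirectSumOfCyclics P)
    (P : Ideal R) (hP : P.IsPrime) (hPm : ¬ P.IsMaximal) :
    ∃ l₀ : Λ, w l₀ ∉ P ∧ (⨆ l ∈ ({l₀}ᶜ : Set Λ), Ideal.span {w l}) = P := by
  classical
  -- cross products vanish
  have hzero : ∀ l m : Λ, l ≠ m → w l * w m = 0 := by
    intro l m hlm
    have h1 : w l * w m ∈ Ideal.span {w l} :=
      Ideal.mul_mem_right _ _ (Ideal.mem_span_singleton_self _)
    have h2 : w l * w m ∈ ⨆ m' ≠ l, Ideal.span {w m'} :=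
      Submodule.mem_iSup_of_mem m (Submodule.mem_iSup_of_mem (Ne.symm hlm)
        (Ideal.mul_mem_left _ _ (Ideal.mem_span_singleton_self _)))
    exact Submodule.disjoint_def.mp (hindep l) _ h1 h2
  have hPle : P ≤ IsLocalRing.maximalIdeal R := IsLocalRing.le_maximalIdeal hP.ne_top
  -- existence of l₀
  have hex : ∃ l₀, w l₀ ∉ P := by
    by_contra hc
    push_neg at hc
    have hMP : IsLocalRing.maximalIdeal R ≤ P := by
      rw [← hsup]
      exact iSup_le fun l => (Ideal.span_le).2 (Set.singleton_subset_iff.2 (hc l))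
    have : P = IsLocalRing.maximalIdeal R := le_antisymm hPle hMP
    exact hPm (this ▸ IsLocalRing.maximalIdeal.isMaximal R)
  obtain ⟨l₀, hl₀⟩ := hex
  set Q : Ideal R := ⨆ l ∈ ({l₀}ᶜ : Set Λ), Ideal.span {w l} with hQdef
  have hQP : Q ≤ P := by
    apply iSup₂_le
    intro l hl
    have hlne : l ≠ l₀ := hl
    have : w l ∈ P := by
      have h0 : w l * w l₀ ∈ P := by rw [hzero l l₀ hlne]; exact P.zero_mem
      exact (hP.mem_or_mem h0).resolve_right hl₀
    exact (Ideal.span_le).2 (Set.singleton_subset_iff.2 this)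
  have hQw : ∀ q ∈ Q, w l₀ * q = 0 := by
    have : Q ≤ LinearMap.ker (LinearMap.mulLeft R (w l₀)) := by
      apply iSup₂_le
      intro l hl
      have hlne : l ≠ l₀ := hl
      apply (Ideal.span_le).2
      intro x hx
      rw [Set.mem_singleton_iff] at hx
      subst hx
      simp only [SetLike.mem_coe, LinearMap.mem_ker, LinearMap.mulLeft_apply]
      rw [mul_comm]
      exact hzero l l₀ hlne
    intro q hq
    have := this hq
    simpa using this
  -- decomposition of the maximal ideal
  have hMsup : Ideal.span {w l₀} ⊔ Q = IsLocalRing.maximalIdeal R := by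
    rw [← hsup, hQdef]
    have : (⨆ l ∈ ({l₀}ᶜ : Set Λ), Ideal.span {w l}) =
        ⨆ (l) (_ : l ≠ l₀), Ideal.span {w l} := by
      apply iSup_congr
      intro l
      rfl
    rw [this]
    exact (iSup_split_single (fun l => Ideal.span {w l}) l₀).symm
  have hdec : ∀ x ∈ IsLocalRing.maximalIdeal R, ∃ a q, q ∈ Q ∧ x = a * w l₀ + q := by
    intro x hx
    rw [← hMsup] at hx
    obtain ⟨y, hy, z, hz, hyz⟩ := Submodule.mem_sup.1 hx
    obtain ⟨a, ha⟩ := Ideal.mem_span_singleton'.1 hy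
    exact ⟨a, z, hz, by rw [← hyz, ha]⟩
  -- key lemma: w l₀ kills P
  obtain ⟨ι, v, hvP, hvind, hvsup⟩ := h P hP
  have hkey : ∀ i, w l₀ * v i = 0 := by
    intro i
    obtain ⟨a, q, hqQ, hxv⟩ := hdec (v i) (hPle (hvP i))
    have hqP : q ∈ P := hQP hqQ
    have haw : a * w l₀ ∈ P := by
      have hsub : v i - q ∈ P := P.sub_mem (hvP i) hqP
      rwa [hxv, add_sub_cancel_right] at hsub
    have haP : a ∈ P := (hP.mem_or_mem haw).resolve_right hl₀
    have haS : a ∈ ⨆ j, Ideal.span {v j} := hvsup.symm ▸ haP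
    have hqS : q ∈ ⨆ j, Ideal.span {v j} := hvsup.symm ▸ hqP
    obtain ⟨cα, hcα⟩ := aux_rep v haS
    obtain ⟨cβ, hcβ⟩ := aux_rep v hqS
    set s : Finset ι := (cα.support ∪ cβ.support) ∪ {i} with hsdef
    have his : i ∈ s := Finset.mem_union_right _ (Finset.mem_singleton_self i)
    have hsubα : cα.support ⊆ s := fun j hj =>
      Finset.mem_union_left _ (Finset.mem_union_left _ hj)
    have hsubβ : cβ.support ⊆ s := fun j hj =>
      Finset.mem_union_left _ (Finset.mem_union_right _ hj)
    have hsa : ∑ j ∈ s, cα j * v j = a := by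
      rw [← hcα]
      exact (Finsupp.sum_of_support_subset cα hsubα (fun j r => r * v j) (fun j _ => zero_mul _)).symm
    have hsb : ∑ j ∈ s, cβ j * v j = q := by
      rw [← hcβ]
      exact (Finsupp.sum_of_support_subset cβ hsubβ (fun j r => r * v j) (fun j _ => zero_mul _)).symm
    -- first relation
    have hyi : (w l₀ * cα i + cβ i) * v i - v i = 0 := by
      have hsum : ∑ j ∈ s, ((w l₀ * cα j + cβ j) * v j - (if j = i then v i else 0)) = 0 := by
        rw [Finset.sum_sub_distrib]
        have e1 : ∑ j ∈ s, (w l₀ * cα j + cβ j) * v j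
            = w l₀ * (∑ j ∈ s, cα j * v j) + ∑ j ∈ s, cβ j * v j := by
          rw [Finset.mul_sum, ← Finset.sum_add_distrib]
          apply Finset.sum_congr rfl
          intro j _
          ring
        have e2 : ∑ j ∈ s, (if j = i then v i else 0) = v i := by
          rw [Finset.sum_ite_eq' s i (fun _ => v i), if_pos his]
        rw [e1, e2, hsa, hsb, hxv]
        ring
      have := aux_comp_zero hvind s _ (fun j => by
        apply Submodule.sub_mem
        · exact Ideal.mem_span_singleton'.2 ⟨_, rfl⟩
        · by_cases hji : j = i
          · rw [if_pos hji, hji]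
            exact Ideal.mem_span_singleton_self _
          · rw [if_neg hji]
            exact Submodule.zero_mem _) hsum i his
      simpa using this
    -- second relation
    have hzi : (w l₀ * cβ i) * v i = 0 := by
      have hsum : ∑ j ∈ s, (w l₀ * cβ j) * v j = 0 := by
        have e1 : ∑ j ∈ s, (w l₀ * cβ j) * v j = w l₀ * ∑ j ∈ s, cβ j * v j := by
          rw [Finset.mul_sum]
          apply Finset.sum_congr rfl
          intro j _
          ring
        rw [e1, hsb]
        exact hQw q hqQ
      exact aux_comp_zero hvind s _ (fun j => Ideal.mem_span_singleton'.2 ⟨_, rfl⟩) hsum i his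
    by_cases hc : cβ i ∈ IsLocalRing.maximalIdeal R
    · have ht : w l₀ * cα i + cβ i ∈ IsLocalRing.maximalIdeal R :=
        Ideal.add_mem _ (Ideal.mul_mem_right _ _ (hmem l₀)) hc
      have hu : IsUnit (1 - (w l₀ * cα i + cβ i)) :=
        IsLocalRing.isUnit_one_sub_self_of_mem_nonunits _ ht
      have h0 : (1 - (w l₀ * cα i + cβ i)) * v i = 0 := by
        linear_combination -hyi
      have hvi : v i = 0 := by
        obtain ⟨u, hu'⟩ := hu
        have := congrArg (fun t => (↑u⁻¹ : R) * t) h0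
        simp only [mul_zero] at this
        rwa [← mul_assoc, ← hu', Units.inv_mul, one_mul] at this
      rw [hvi, mul_zero]
    · have hu : IsUnit (cβ i) := by
        by_contra hnu
        exact hc ((IsLocalRing.mem_maximalIdeal _).2 hnu)
      have h0 : cβ i * (w l₀ * v i) = 0 := by linear_combination hzi
      obtain ⟨u, hu'⟩ := hu
      have := congrArg (fun t => (↑u⁻¹ : R) * t) h0
      simp only [mul_zero] at this
      rwa [← mul_assoc, ← hu', Units.inv_mul, one_mul] at this
  have hWP : ∀ x ∈ P, w l₀ * x = 0 := by
    have hle : P ≤ LinearMap.ker (LinearMap.mulLeft R (w l₀)) := by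
      rw [← hvsup]
      apply iSup_le
      intro i
      apply (Ideal.span_le).2
      intro x hx
      rw [Set.mem_singleton_iff] at hx
      subst hx
      simp only [SetLike.mem_coe, LinearMap.mem_ker, LinearMap.mulLeft_apply]
      exact hkey i
    intro x hx
    simpa using hle hx
  refine ⟨l₀, hl₀, le_antisymm hQP ?_⟩
  intro x hx
  obtain ⟨a, q, hqQ, hxd⟩ := hdec x (hPle hx)
  have hqP : q ∈ P := hQP hqQ
  have haw : a * w l₀ ∈ P := by
    have hsub : x - q ∈ P := P.sub_mem hx hqP
    rwa [hxd, add_sub_cancel_right] at hsub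
  have haP : a ∈ P := (hP.mem_or_mem haw).resolve_right hl₀
  have : a * w l₀ = 0 := by rw [mul_comm]; exact hWP a haP
  rw [hxd, this, zero_add]
  exact hqQ
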